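/- Let m, r be positive integers, set s = r + 2, and let (T_n) and (S_n) be sequences of nonzero polynomials in ℚ[t] with T₁ = 1, T₂ = W(r,m,s), S₁ = 1, S₂ = W(r−1,m+1,s−1), satisfying T_{n+1}T_{n−1} = (t²−t)(T_nT_n″ − (T_n′)²) + (2t−1)T_nT_n′ + (n−1)(n+r)T_n² and S_{n+1}S_{n−1} = (t²−t)(S_nS_n″ − (S_n′)²) + (2t−1)S_nS_n′ + (n−1)(n+r−1)S_n² for all n ≥ 2. Then for every n ≥ 2, (t−1)^{m(n−2)} divides T_n with quotient of degree m, and (t−1)^{(m+1)(n−2)} divides S_n with quotient of degree m+1. -/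

import Mathlib

open Polynomial Finset

/-- `W(r,m,s)(t) = Σ_{j=0}^m (−1)^j C(r+m+1−j, m−j) C(s+m, j) t^{m−j}` in `ℚ[t]`. -/
noncomputable def W (r m s : ℕ) : Polynomial ℚ :=
  ∑ j ∈ range (m + 1),
    C ((-1 : ℚ) ^ j * (Nat.choose (r + m + 1 - j) (m - j) : ℚ) * (Nat.choose (s + m) j : ℚ))
      * X ^ (m - j)

noncomputable def Rhs (c : ℚ) (p : Polynomial ℚ) : Polynomial ℚ :=
  (X ^ 2 - X) * (p * derivative (derivative p) - (derivative p) ^ 2)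
    + (2 * X - 1) * (p * derivative p) + C c * p ^ 2

lemma L1 (c : ℚ) (σ : Polynomial ℚ) :
    Rhs c ((X - 1) * σ) = (X - 1) ^ 2 * (Rhs c σ + σ ^ 2) := by
  simp only [Rhs, derivative_mul, derivative_add, derivative_sub, derivative_X, derivative_one, sub_zero, one_mul]
  ring

lemma Lpow (c : ℚ) (a : ℕ) (u : Polynomial ℚ) :
    Rhs c ((X - 1) ^ a * u) = (X - 1) ^ (2 * a) * (Rhs c u + C (a : ℚ) * u ^ 2) := by
  induction a with
  | zero => simp
  | succ n ih =>
      have : (X - 1 : Polynomial ℚ) ^ (n + 1) * u = (X - 1) * ((X - 1) ^ n * u) := by ring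
      rw [this, L1, ih]
      rw [Nat.cast_add, Nat.cast_one, map_add, map_one]
      ring

lemma Ldvd {c : ℚ} {a : ℕ} {p : Polynomial ℚ} (h : (X - 1) ^ a ∣ p) :
    (X - 1) ^ (2 * a) ∣ Rhs c p := by
  obtain ⟨u, rfl⟩ := h
  rw [Lpow]
  exact Dvd.intro _ rfl

lemma Rhs_C_mul (c k : ℚ) (p : Polynomial ℚ) :
    Rhs c (C k * p) = C (k ^ 2) * Rhs c p := by
  simp only [Rhs, derivative_C_mul, map_pow]
  ring

lemma Rhs_linear (c a b : ℚ) :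
    Rhs c (C a * X + C b)
      = C ((1 + c) * a ^ 2) * X ^ 2 + C (2 * a * b * (1 + c)) * X + C (c * b ^ 2 - a * b) := by
  simp only [Rhs, derivative_add, derivative_mul, derivative_C, derivative_X, derivative_one,
    zero_mul, mul_one, zero_add, add_zero, derivative_zero, mul_zero, C_mul, C_add, C_sub,
    C_pow, C_1, map_ofNat]
  ring

lemma coeff_Rhs (c : ℚ) (p : Polynomial ℚ) (hd : 1 ≤ p.natDegree) :
    (Rhs c p).coeff (2 * p.natDegree) = ((p.natDegree : ℚ) + c) * p.leadingCoeff ^ 2 := by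
  rcases eq_or_lt_of_le hd with h1 | h2
  · -- d = 1
    have hp1 : p.natDegree ≤ 1 := h1.ge
    have hp : p = C (p.coeff 1) * X + C (p.coeff 0) := eq_X_add_C_of_natDegree_le_one hp1
    rw [leadingCoeff, ← h1, hp, Rhs_linear]
    simp only [coeff_add, coeff_C_mul, coeff_X_pow, coeff_X, coeff_C]
    norm_num
  · -- d ≥ 2
    obtain ⟨e, he⟩ : ∃ e, p.natDegree = e + 2 := ⟨p.natDegree - 2, by omega⟩
    set d := p.natDegree with hdd
    have hder1 : (derivative p).natDegree ≤ e + 1 := by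
      have := natDegree_derivative_le p; omega
    have hder2 : (derivative (derivative p)).natDegree ≤ e := by
      have := natDegree_derivative_le (derivative p); omega
    have hc1 : (derivative p).coeff (e + 1) = ((e : ℚ) + 2) * p.coeff d := by
      rw [coeff_derivative, he]; push_cast; ring
    have hc2 : (derivative (derivative p)).coeff e = ((e : ℚ) + 2) * ((e : ℚ) + 1) * p.coeff d := by
      rw [coeff_derivative, hc1]; ring
    have hXX : (X ^ 2 - X : Polynomial ℚ).natDegree ≤ 2 := by
      refine le_trans (natDegree_sub_le _ _) ?_
      simp [natDegree_X_pow, natDegree_X]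
    have h2X : (2 * X - 1 : Polynomial ℚ).natDegree ≤ 1 := by
      refine le_trans (natDegree_sub_le _ _) ?_
      simp only [natDegree_one]
      refine max_le (le_trans (natDegree_mul_le) ?_) (by norm_num)
      simp [natDegree_X]
    -- term 1
    have hB : (p * derivative (derivative p) - (derivative p) ^ 2).natDegree ≤ 2 * e + 2 := by
      refine le_trans (natDegree_sub_le _ _) (max_le ?_ ?_)
      · refine le_trans natDegree_mul_le ?_; omega
      · rw [pow_two]; refine le_trans natDegree_mul_le ?_; omega
    have t1 : ((X ^ 2 - X) * (p * derivative (derivative p) - (derivative p) ^ 2)).coeff (2 * d)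
        = (p.coeff d * ((derivative (derivative p)).coeff e)
            - ((derivative p).coeff (e + 1)) ^ 2) := by
      have h := coeff_mul_add_eq_of_natDegree_le hXX hB
      rw [show 2 + (2 * e + 2) = 2 * d by omega] at h
      rw [h]
      have hx2 : (X ^ 2 - X : Polynomial ℚ).coeff 2 = 1 := by
        simp [coeff_sub, coeff_X_pow, coeff_X]
      rw [hx2, one_mul, coeff_sub]
      congr 1
      · have := coeff_mul_add_eq_of_natDegree_le (le_refl d : p.natDegree ≤ d) hder2
        rw [show d + e = 2 * e + 2 by omega] at this
        rw [this]
      · rw [pow_two, pow_two]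
        have := coeff_mul_add_eq_of_natDegree_le hder1 hder1
        rw [show (e + 1) + (e + 1) = 2 * e + 2 by omega] at this
        rw [this]
    -- term 2
    have hC : (p * derivative p).natDegree ≤ 2 * e + 3 := by
      refine le_trans natDegree_mul_le ?_; omega
    have t2 : ((2 * X - 1) * (p * derivative p)).coeff (2 * d)
        = 2 * (p.coeff d * (derivative p).coeff (e + 1)) := by
      have h := coeff_mul_add_eq_of_natDegree_le h2X hC
      rw [show 1 + (2 * e + 3) = 2 * d by omega] at h
      rw [h]
      have hx1 : (2 * X - 1 : Polynomial ℚ).coeff 1 = 2 := by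
        simp [coeff_sub, coeff_one]
      rw [hx1]
      congr 1
      have := coeff_mul_add_eq_of_natDegree_le (le_refl d : p.natDegree ≤ d) hder1
      rw [show d + (e + 1) = 2 * e + 3 by omega] at this
      rw [this]
    -- term 3
    have t3 : (C c * p ^ 2).coeff (2 * d) = c * (p.coeff d) ^ 2 := by
      rw [coeff_C_mul, pow_two, pow_two]
      have := coeff_mul_add_eq_of_natDegree_le (le_refl d : p.natDegree ≤ d) (le_refl d : p.natDegree ≤ d)
      rw [show d + d = 2 * d by omega] at this
      rw [this]
    rw [Rhs, coeff_add, coeff_add, t1, t2, t3, hc1, hc2, leadingCoeff, ← hdd, he]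
    push_cast
    ring

lemma natDegree_Rhs_le (c : ℚ) (p : Polynomial ℚ) (hd : 1 ≤ p.natDegree) :
    (Rhs c p).natDegree ≤ 2 * p.natDegree := by
  rcases eq_or_lt_of_le hd with h1 | h2
  · have hp : p = C (p.coeff 1) * X + C (p.coeff 0) := eq_X_add_C_of_natDegree_le_one h1.ge
    have key : (Rhs c p).natDegree ≤ 2 := by
      rw [hp, Rhs_linear]
      refine le_trans (natDegree_add_le _ _) (max_le (le_trans (natDegree_add_le _ _)
        (max_le ?_ ?_)) ?_)
      · exact le_trans (natDegree_C_mul_le _ _) (by simp [natDegree_X_pow])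
      · exact le_trans (natDegree_C_mul_le _ _) (by simp [natDegree_X])
      · exact le_trans (natDegree_C _).le (by norm_num)
    omega
  set d := p.natDegree with hdd
  have hd2 : 2 ≤ d := h2
  have hder1 : (derivative p).natDegree ≤ d - 1 := natDegree_derivative_le p
  have hder2 : (derivative (derivative p)).natDegree ≤ d - 2 := by
    have h := natDegree_derivative_le (derivative p); omega
  have hXX : (X ^ 2 - X : Polynomial ℚ).natDegree ≤ 2 := by
    refine le_trans (natDegree_sub_le _ _) ?_
    simp [natDegree_X_pow, natDegree_X]
  have h2X : (2 * X - 1 : Polynomial ℚ).natDegree ≤ 1 := by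
    refine le_trans (natDegree_sub_le _ _) ?_
    simp only [natDegree_one]
    refine max_le (le_trans (natDegree_mul_le) ?_) (by norm_num)
    simp [natDegree_X]
  refine le_trans (natDegree_add_le _ _) (max_le (le_trans (natDegree_add_le _ _)
    (max_le ?_ ?_)) ?_)
  · refine le_trans natDegree_mul_le ?_
    have : (p * derivative (derivative p) - (derivative p) ^ 2).natDegree ≤ 2 * d - 2 := by
      refine le_trans (natDegree_sub_le _ _) (max_le ?_ ?_)
      · refine le_trans natDegree_mul_le ?_; omega
      · rw [pow_two]; refine le_trans natDegree_mul_le ?_; omega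
    omega
  · refine le_trans natDegree_mul_le ?_
    have : (p * derivative p).natDegree ≤ 2 * d - 1 := by
      refine le_trans natDegree_mul_le ?_; omega
    omega
  · have : (p ^ 2).natDegree ≤ 2 * d := by
      rw [pow_two]; refine le_trans natDegree_mul_le ?_; omega
    exact le_trans (natDegree_C_mul_le _ _) this

lemma natDegree_Rhs (c : ℚ) (p : Polynomial ℚ) (hp : p ≠ 0) (hd : 1 ≤ p.natDegree)
    (hc : 0 < c) : (Rhs c p).natDegree = 2 * p.natDegree := by
  refine le_antisymm (natDegree_Rhs_le c p hd) ?_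
  refine le_natDegree_of_ne_zero ?_
  rw [coeff_Rhs c p hd]
  have h1 : ((p.natDegree : ℚ) + c) > 0 := by positivity
  have h2 : p.leadingCoeff ≠ 0 := leadingCoeff_ne_zero.mpr hp
  positivity

noncomputable def qp (b M : ℕ) : Polynomial ℚ :=
  ∑ k ∈ range (M + 1), C (((b - 1 + k).choose k : ℕ) : ℚ) * (1 - X) ^ k

lemma L_q (b M : ℕ) (hb : 1 ≤ b) :
    X * derivative (qp b M) + C (b : ℚ) * qp b M
      = C (((b : ℚ) + (M : ℚ)) * (((b - 1 + M).choose M : ℕ) : ℚ)) * (1 - X) ^ M := by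
  induction M with
  | zero =>
      simp [qp]
  | succ M ih =>
      have hnat : (b + M) * (b - 1 + M).choose M = (M + 1) * (b - 1 + (M + 1)).choose (M + 1) := by
        have h := Nat.add_one_mul_choose_eq (b - 1 + M) M
        rw [show b - 1 + M + 1 = b + M by omega] at h
        rw [show b - 1 + (M + 1) = b + M by omega]
        rw [h]; ring
      have hX : ((b : Polynomial ℚ) + (M : Polynomial ℚ)) * ((b - 1 + M).choose M : Polynomial ℚ)
          = ((M : Polynomial ℚ) + 1) * ((b - 1 + (M + 1)).choose (M + 1) : Polynomial ℚ) := by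
        exact_mod_cast congrArg (Nat.cast (R := Polynomial ℚ)) hnat
      rw [qp, sum_range_succ, ← qp]
      simp only [derivative_add, derivative_mul, derivative_C, zero_mul, zero_add,
        derivative_pow, derivative_sub, derivative_one, derivative_X, zero_sub,
        map_natCast, C_mul, C_add, C_1, Nat.cast_add, Nat.cast_one, Nat.add_sub_cancel,
        derivative_natCast] at ih ⊢
      linear_combination ih + (1 - X : Polynomial ℚ) ^ M * hX

lemma keyI (β : ℚ) (q : Polynomial ℚ) :
    X * Rhs β q
      = -(X * (1 - X)) * q * derivative (X * derivative q + C β * q)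
        + (1 - X) * (X * derivative q + C β * q) ^ 2
        - ((C β + 1) * (1 - X) - 1) * (X * derivative q + C β * q) * q := by
  simp only [Rhs, derivative_add, derivative_mul, derivative_X, derivative_C, one_mul,
    zero_mul, zero_add]
  ring

lemma one_sub_X_natDegree : (1 - X : Polynomial ℚ).natDegree = 1 := by
  rw [show (1 - X : Polynomial ℚ) = -(X - C 1) by rw [neg_sub, C_1]]
  rw [natDegree_neg, natDegree_X_sub_C]

lemma one_sub_X_pow_coeff (M : ℕ) : ((1 - X : Polynomial ℚ) ^ M).coeff M = (-1) ^ M := by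
  have h : (1 - X : Polynomial ℚ) ^ M = C ((-1 : ℚ) ^ M) * (X - C 1) ^ M := by
    rw [show (1 - X : Polynomial ℚ) = C (-1) * (X - C 1) by rw [C_neg, C_1]; ring]
    rw [mul_pow, ← C_pow]
  rw [h, coeff_C_mul]
  have hm : Monic ((X - C (1:ℚ)) ^ M) := (monic_X_sub_C 1).pow M
  have hd : ((X - C (1:ℚ)) ^ M).natDegree = M := by
    rw [natDegree_pow, natDegree_X_sub_C, mul_one]
  have h1 := hm.coeff_natDegree
  rw [hd] at h1
  rw [h1]; ring

lemma natDegree_qp (b M : ℕ) : (qp b M).natDegree = M := by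
  have hle : (qp b M).natDegree ≤ M := by
    refine natDegree_sum_le_of_forall_le _ _ fun k hk => ?_
    refine le_trans (natDegree_C_mul_le _ _) ?_
    rw [natDegree_pow, one_sub_X_natDegree, mul_one]
    exact Nat.lt_succ_iff.mp (mem_range.mp hk)
  have hco : (qp b M).coeff M = ((b - 1 + M).choose M : ℚ) * (-1) ^ M := by
    rw [qp, finset_sum_coeff]
    rw [Finset.sum_eq_single M]
    · rw [coeff_C_mul, one_sub_X_pow_coeff]
    · intro k hk hkM
      have h1 : (C (((b - 1 + k).choose k : ℕ) : ℚ) * (1 - X) ^ k).natDegree ≤ k :=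
        le_trans (natDegree_C_mul_le _ _)
          (le_of_eq (by rw [natDegree_pow, one_sub_X_natDegree, mul_one]))
      have h2 : k < M := lt_of_le_of_ne (Nat.lt_succ_iff.mp (mem_range.mp hk)) hkM
      exact coeff_eq_zero_of_natDegree_lt (lt_of_le_of_lt h1 h2)
    · intro h; exact absurd (self_mem_range_succ M) h
  refine le_antisymm hle (le_natDegree_of_ne_zero ?_)
  rw [hco]
  have h1 : ((b - 1 + M).choose M : ℚ) ≠ 0 := by
    exact_mod_cast (Nat.choose_pos (by omega : M ≤ b - 1 + M)).ne'
  intro h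
  rcases mul_eq_zero.mp h with h' | h'
  · exact h1 h'
  · exact (pow_ne_zero M (by norm_num : (-1 : ℚ) ≠ 0)) h'

lemma eval_one_qp (b M : ℕ) : eval 1 (qp b M) = 1 := by
  rw [qp, eval_finset_sum]
  rw [Finset.sum_eq_single_of_mem 0 (mem_range.mpr (Nat.succ_pos M))]
  · simp
  · intro k _ hk0
    simp [zero_pow hk0]

lemma dvd_Rhs_qp (b M : ℕ) (hb : 1 ≤ b) (hM : 1 ≤ M) :
    (X - 1 : Polynomial ℚ) ^ M ∣ Rhs (b : ℚ) (qp b M) := by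
  set q := qp b M
  set γ : ℚ := ((b : ℚ) + (M : ℚ)) * (((b - 1 + M).choose M : ℕ) : ℚ) with hγ
  have hS : X * derivative q + C (b : ℚ) * q = C γ * (1 - X) ^ M := L_q b M hb
  have hS' : derivative (X * derivative q + C (b : ℚ) * q)
      = C γ * (C (M : ℚ) * (1 - X) ^ (M - 1) * (-1)) := by
    rw [hS, derivative_C_mul, derivative_pow]
    rw [show derivative (1 - X : Polynomial ℚ) = -1 by simp]
  have hdvd : (1 - X : Polynomial ℚ) ^ M ∣ X * Rhs (b : ℚ) q := by
    rw [keyI]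
    refine dvd_sub (dvd_add ?_ ?_) ?_
    · rw [hS']
      have hpow : (1 - X : Polynomial ℚ) * (1 - X) ^ (M - 1) = (1 - X) ^ M := by
        rw [← pow_succ']; congr 1; omega
      refine ⟨X * q * (C γ * C (M : ℚ)), ?_⟩
      rw [← hpow]; ring
    · rw [hS]
      exact ⟨C γ ^ 2 * (1 - X) ^ (M + 1), by ring⟩
    · rw [hS]
      exact ⟨((C (b : ℚ) + 1) * (1 - X) - 1) * C γ * q, by ring⟩
  have hcop : IsCoprime ((1 - X : Polynomial ℚ) ^ M) X := by
    refine IsCoprime.pow_left ⟨1, 1, by ring⟩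
  have h2 : (1 - X : Polynomial ℚ) ^ M ∣ Rhs (b : ℚ) q := hcop.dvd_of_dvd_mul_left hdvd
  refine dvd_trans ⟨(-1 : Polynomial ℚ) ^ M, ?_⟩ h2
  rw [← mul_pow, show ((X - 1 : Polynomial ℚ) * -1) = 1 - X by ring]

lemma SL1 (b i : ℕ) (hb : 1 ≤ b) :
    (i + b) * (b - 1 + i).choose i = b * (b + i).choose i := by
  have h1 := Nat.add_one_mul_choose_eq (b - 1 + i) i
  rw [show b - 1 + i + 1 = b + i by omega] at h1
  have h2 := Nat.choose_succ_right_eq (b + i) i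
  rw [show b + i - i = b by omega] at h2
  calc (i + b) * (b - 1 + i).choose i = (b + i) * (b - 1 + i).choose i := by ring
    _ = (b + i).choose (i + 1) * (i + 1) := h1
    _ = (b + i).choose i * b := h2
    _ = b * (b + i).choose i := by ring

lemma SL2 (b j M : ℕ) (hjM : j ≤ M) :
    (b + j).choose j * (b + M).choose (M - j) = (b + M).choose M * M.choose j := by
  have q : (((b + j).choose j : ℕ) : ℚ) * (((b + M).choose (M - j) : ℕ) : ℚ)
      = (((b + M).choose M : ℕ) : ℚ) * ((M.choose j : ℕ) : ℚ) := by
    rw [Nat.cast_choose ℚ (show j ≤ b + j by omega),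
        Nat.cast_choose ℚ (show M - j ≤ b + M by omega),
        Nat.cast_choose ℚ (show M ≤ b + M by omega),
        Nat.cast_choose ℚ hjM]
    rw [show b + j - j = b by omega, show b + M - (M - j) = b + j by omega,
        show b + M - M = b by omega]
    have f1 : ((Nat.factorial j : ℕ) : ℚ) ≠ 0 := by
      exact_mod_cast (Nat.factorial_pos j).ne'
    have f2 : ((Nat.factorial (M - j) : ℕ) : ℚ) ≠ 0 := by
      exact_mod_cast (Nat.factorial_pos (M - j)).ne'
    have f3 : ((Nat.factorial b : ℕ) : ℚ) ≠ 0 := by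
      exact_mod_cast (Nat.factorial_pos b).ne'
    have f4 : ((Nat.factorial (b + j) : ℕ) : ℚ) ≠ 0 := by
      exact_mod_cast (Nat.factorial_pos (b + j)).ne'
    have f5 : ((Nat.factorial M : ℕ) : ℚ) ≠ 0 := by
      exact_mod_cast (Nat.factorial_pos M).ne'
    field_simp
  exact_mod_cast q

lemma NI (b j M : ℕ) (hb : 1 ≤ b) (hjM : j ≤ M) :
    (j + b) * (b - 1 + j).choose j * (b + M).choose (M - j)
      = (b + M) * ((b - 1 + M).choose M * M.choose j) := by
  have h1 := SL1 b j hb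
  have h2 := SL1 b M hb
  have h3 := SL2 b j M hjM
  calc (j + b) * (b - 1 + j).choose j * (b + M).choose (M - j)
      = (b * (b + j).choose j) * (b + M).choose (M - j) := by rw [h1]
    _ = b * ((b + j).choose j * (b + M).choose (M - j)) := by ring
    _ = b * ((b + M).choose M * M.choose j) := by rw [h3]
    _ = (b * (b + M).choose M) * M.choose j := by ring
    _ = ((M + b) * (b - 1 + M).choose M) * M.choose j := by rw [h2]
    _ = (b + M) * ((b - 1 + M).choose M * M.choose j) := by ring

lemma Ldiag (b : ℚ) (y : Polynomial ℚ) (k : ℕ) :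
    (X * derivative y + C b * y).coeff k = ((k : ℚ) + b) * y.coeff k := by
  rcases k with _ | k
  · rw [coeff_add, mul_coeff_zero, coeff_X_zero, zero_mul, zero_add, coeff_C_mul]
    push_cast; ring
  · rw [coeff_add, coeff_X_mul, coeff_derivative, coeff_C_mul]
    push_cast; ring

lemma LC_mono (b w : ℚ) (e : ℕ) :
    X * derivative (C w * X ^ e) + C b * (C w * X ^ e) = C (w * ((e : ℚ) + b)) * X ^ e := by
  rcases e with _ | e
  · simp only [pow_zero, mul_one, derivative_C, mul_zero, zero_add, Nat.cast_zero]
    rw [← C_mul]; ring_nf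
  · rw [derivative_C_mul, derivative_X_pow, Nat.add_sub_cancel]
    simp only [C_mul, C_add, Nat.cast_add, Nat.cast_one, C_1]
    ring

lemma L_W (ρ M : ℕ) :
    X * derivative (W ρ M (ρ + 2)) + C ((ρ : ℚ) + 2) * W ρ M (ρ + 2)
      = C ((-1 : ℚ) ^ M)
          * (C ((((ρ : ℚ) + 2) + (M : ℚ)) * (((ρ + 1 + M).choose M : ℕ) : ℚ)) * (1 - X) ^ M) := by
  rw [W, derivative_sum, Finset.mul_sum, Finset.mul_sum, ← Finset.sum_add_distrib]
  have hterm : ∀ j,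
      X * derivative (C ((-1 : ℚ) ^ j * ((ρ + M + 1 - j).choose (M - j) : ℚ)
            * (((ρ + 2) + M).choose j : ℚ)) * X ^ (M - j))
        + C ((ρ : ℚ) + 2) * (C ((-1 : ℚ) ^ j * ((ρ + M + 1 - j).choose (M - j) : ℚ)
            * (((ρ + 2) + M).choose j : ℚ)) * X ^ (M - j))
      = C (((-1 : ℚ) ^ j * ((ρ + M + 1 - j).choose (M - j) : ℚ)
            * (((ρ + 2) + M).choose j : ℚ)) * (((M - j : ℕ) : ℚ) + ((ρ : ℚ) + 2)))
          * X ^ (M - j) :=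
    fun j => LC_mono ((ρ : ℚ) + 2) _ (M - j)
  simp only [hterm]
  rw [show (1 - X : Polynomial ℚ) = -X + 1 by ring, add_pow]
  rw [Finset.mul_sum, Finset.mul_sum]
  rw [← Finset.sum_range_reflect]
  simp only [Nat.add_sub_cancel]
  refine Finset.sum_congr rfl fun j hj => ?_
  have hjM : j ≤ M := Nat.lt_succ_iff.mp (mem_range.mp hj)
  rw [show M - (M - j) = j by omega, show ρ + M + 1 - (M - j) = ρ + 1 + j by omega]
  rw [one_pow, mul_one]
  have hsign : (-1 : ℚ) ^ M = (-1 : ℚ) ^ (M - j) * (-1 : ℚ) ^ j := by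
    rw [← pow_add]; congr 1; omega
  have hsq : ((-1 : ℚ) ^ j) ^ 2 = 1 := by
    rw [← pow_mul, mul_comm, pow_mul]; norm_num
  have hQ : ((j : ℚ) + ((ρ : ℚ) + 2)) * (((ρ + 1 + j).choose j : ℕ) : ℚ)
        * ((((ρ + 2) + M).choose (M - j) : ℕ) : ℚ)
      = (((ρ : ℚ) + 2) + (M : ℚ))
        * ((((ρ + 1 + M).choose M : ℕ) : ℚ) * ((M.choose j : ℕ) : ℚ)) := by
    have h := NI (ρ + 2) j M (by omega) hjM
    rw [show ρ + 2 - 1 + j = ρ + 1 + j by omega, show ρ + 2 - 1 + M = ρ + 1 + M by omega] at h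
    exact_mod_cast h
  have hscal : (-1 : ℚ) ^ (M - j) * (((ρ + 1 + j).choose j : ℕ) : ℚ)
        * ((((ρ + 2) + M).choose (M - j) : ℕ) : ℚ) * ((j : ℚ) + ((ρ : ℚ) + 2))
      = (-1 : ℚ) ^ M * ((((ρ : ℚ) + 2) + (M : ℚ)) * (((ρ + 1 + M).choose M : ℕ) : ℚ))
        * ((-1 : ℚ) ^ j * ((M.choose j : ℕ) : ℚ)) := by
    linear_combination ((-1 : ℚ) ^ (M - j)) * hQ
      - ((-1 : ℚ) ^ j * ((((ρ : ℚ) + 2) + (M : ℚ)) * (((ρ + 1 + M).choose M : ℕ) : ℚ))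
          * ((M.choose j : ℕ) : ℚ)) * hsign
      - ((-1 : ℚ) ^ (M - j) * ((((ρ : ℚ) + 2) + (M : ℚ)) * (((ρ + 1 + M).choose M : ℕ) : ℚ))
          * ((M.choose j : ℕ) : ℚ)) * hsq
  rw [show (-1 : ℚ) ^ (M - j) * (((ρ + 1 + j).choose j : ℕ) : ℚ)
        * ((((ρ + 2) + M).choose (M - j) : ℕ) : ℚ) * ((j : ℚ) + ((ρ : ℚ) + 2))
      = (-1 : ℚ) ^ M * ((((ρ : ℚ) + 2) + (M : ℚ)) * (((ρ + 1 + M).choose M : ℕ) : ℚ))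
        * ((-1 : ℚ) ^ j * ((M.choose j : ℕ) : ℚ)) from hscal]
  rw [neg_pow]
  simp only [C_mul, C_eq_natCast, map_pow, map_neg, map_one]
  ring

lemma W_eq (ρ M : ℕ) : W ρ M (ρ + 2) = C ((-1 : ℚ) ^ M) * qp (ρ + 2) M := by
  have hR : X * derivative (C ((-1 : ℚ) ^ M) * qp (ρ + 2) M)
      + C ((ρ : ℚ) + 2) * (C ((-1 : ℚ) ^ M) * qp (ρ + 2) M)
      = C ((-1 : ℚ) ^ M)
          * (C ((((ρ : ℚ) + 2) + (M : ℚ)) * (((ρ + 1 + M).choose M : ℕ) : ℚ)) * (1 - X) ^ M) := by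
    rw [derivative_C_mul]
    have h := L_q (ρ + 2) M (by omega)
    rw [show ρ + 2 - 1 + M = ρ + 1 + M by omega] at h
    rw [show (((ρ + 2 : ℕ)) : ℚ) = (ρ : ℚ) + 2 by push_cast; ring] at h
    calc X * (C ((-1 : ℚ) ^ M) * derivative (qp (ρ + 2) M))
          + C ((ρ : ℚ) + 2) * (C ((-1 : ℚ) ^ M) * qp (ρ + 2) M)
        = C ((-1 : ℚ) ^ M)
            * (X * derivative (qp (ρ + 2) M) + C ((ρ : ℚ) + 2) * qp (ρ + 2) M) := by ring
      _ = _ := by rw [h]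
  have hL := L_W ρ M
  apply Polynomial.ext
  intro k
  have h1 := Ldiag ((ρ : ℚ) + 2) (W ρ M (ρ + 2)) k
  have h2 := Ldiag ((ρ : ℚ) + 2) (C ((-1 : ℚ) ^ M) * qp (ρ + 2) M) k
  have hk : ((k : ℚ) + ((ρ : ℚ) + 2)) ≠ 0 := by positivity
  apply mul_left_cancel₀ hk
  rw [← h1, ← h2, hL, hR]

lemma W_natDegree (ρ M : ℕ) : (W ρ M (ρ + 2)).natDegree = M := by
  rw [W_eq, natDegree_C_mul (pow_ne_zero M (by norm_num : (-1 : ℚ) ≠ 0)), natDegree_qp]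

lemma W_eval_one (ρ M : ℕ) : eval 1 (W ρ M (ρ + 2)) ≠ 0 := by
  rw [W_eq, eval_mul, eval_C, eval_one_qp, mul_one]
  exact pow_ne_zero M (by norm_num)

lemma W_dvd (ρ M : ℕ) (hM : 1 ≤ M) :
    (X - 1 : Polynomial ℚ) ^ M ∣ Rhs ((ρ : ℚ) + 2) (W ρ M (ρ + 2)) := by
  rw [W_eq, Rhs_C_mul]
  rw [show ((-1 : ℚ) ^ M) ^ 2 = 1 by rw [← pow_mul, mul_comm, pow_mul]; norm_num, C_1, one_mul]
  have h := dvd_Rhs_qp (ρ + 2) M (by omega) hM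
  rw [show (((ρ + 2 : ℕ)) : ℚ) = (ρ : ℚ) + 2 by push_cast; ring] at h
  exact h

lemma X_sub_one_ne : (X - 1 : Polynomial ℚ) ≠ 0 := by
  rw [show (1 : Polynomial ℚ) = C 1 from C_1.symm]
  exact X_sub_C_ne_zero 1

lemma X_sub_one_natDegree : (X - 1 : Polynomial ℚ).natDegree = 1 := by
  rw [show (1 : Polynomial ℚ) = C 1 from C_1.symm]
  exact natDegree_X_sub_C 1

lemma main_machine (M : ℕ) (hM : 1 ≤ M) (c : ℕ → ℚ) (hc : ∀ n, 2 ≤ n → 0 < c n)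
    (τ : ℕ → Polynomial ℚ) (h0 : ∀ n, 1 ≤ n → τ n ≠ 0) (h1 : τ 1 = 1)
    (hdeg2 : (τ 2).natDegree = M) (heval : eval 1 (τ 2) ≠ 0)
    (hdvd3 : (X - 1 : Polynomial ℚ) ^ M ∣ Rhs (c 2) (τ 2))
    (hrec : ∀ n, 2 ≤ n → τ (n + 1) * τ (n - 1) = Rhs (c n) (τ n)) :
    ∀ n, 2 ≤ n → ∃ V, τ n = (X - 1) ^ (M * (n - 2)) * V ∧ V.natDegree = M := by
  -- degrees
  have key : ∀ n : ℕ, (τ (n + 1)).natDegree = M * n ∧ (τ (n + 2)).natDegree = M * (n + 1) := by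
    intro n
    induction n with
    | zero =>
        constructor
        · rw [h1, natDegree_one, Nat.mul_zero]
        · rw [hdeg2, Nat.mul_one]
    | succ n ih =>
        refine ⟨ih.2, ?_⟩
        have h2n : 2 ≤ n + 2 := by omega
        have hrec' := hrec (n + 2) h2n
        rw [show n + 2 + 1 = n + 3 by omega, show n + 2 - 1 = n + 1 by omega] at hrec'
        have hτn2 : τ (n + 2) ≠ 0 := h0 _ (by omega)
        have hdeg : (Rhs (c (n + 2)) (τ (n + 2))).natDegree = 2 * (M * (n + 1)) := by
          rw [natDegree_Rhs _ _ hτn2 (by rw [ih.2]; exact Nat.mul_pos (by omega) (by omega))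
            (hc _ h2n), ih.2]
        have hmul : (τ (n + 3) * τ (n + 1)).natDegree
            = (τ (n + 3)).natDegree + (τ (n + 1)).natDegree :=
          natDegree_mul (h0 _ (by omega)) (h0 _ (by omega))
        rw [hrec', hdeg] at hmul
        have e1 := ih.1
        have e2 : M * (n + 2) + M * n = 2 * (M * (n + 1)) := by ring
        rw [show n + 1 + 2 = n + 3 by omega, show n + 1 + 1 = n + 2 by omega]
        omega
  have hD : ∀ n, 1 ≤ n → (τ n).natDegree = M * (n - 1) := by
    intro n hn
    have h := (key (n - 1)).1
    rw [show n - 1 + 1 = n by omega] at h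
    exact h
  -- root multiplicities at 1
  set a : ℕ → ℕ := fun n => rootMultiplicity 1 (τ n) with ha
  have hpowdvd : ∀ n, (X - 1 : Polynomial ℚ) ^ (a n) ∣ τ n := by
    intro n
    have := pow_rootMultiplicity_dvd (τ n) 1
    rwa [C_1] at this
  have hconv : ∀ n, 2 ≤ n → 2 * a n ≤ a (n + 1) + a (n - 1) := by
    intro n hn
    have hne : τ (n + 1) * τ (n - 1) ≠ 0 :=
      mul_ne_zero (h0 _ (by omega)) (h0 _ (by omega))
    have hdvd : (X - 1 : Polynomial ℚ) ^ (2 * a n) ∣ τ (n + 1) * τ (n - 1) := by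
      rw [hrec n hn]; exact Ldvd (hpowdvd n)
    have hle : 2 * a n ≤ rootMultiplicity 1 (τ (n + 1) * τ (n - 1)) := by
      refine (le_rootMultiplicity_iff hne).mpr ?_
      rwa [C_1]
    rwa [rootMultiplicity_mul hne] at hle
  have ha2 : a 2 = 0 := rootMultiplicity_eq_zero heval
  have ha3 : M ≤ a 3 := by
    have h3 : τ 3 = Rhs (c 2) (τ 2) := by
      have h := hrec 2 le_rfl
      rwa [show (2 : ℕ) - 1 = 1 by omega, h1, mul_one, show (2 : ℕ) + 1 = 3 by omega] at h
    refine (le_rootMultiplicity_iff (h0 3 (by omega))).mpr ?_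
    rw [C_1, h3]
    exact hdvd3
  have hstep : ∀ n, 2 ≤ n → a n + M ≤ a (n + 1) := by
    intro n hn
    induction n, hn using Nat.le_induction with
    | base =>
        have h3' : a (2 + 1) = a 3 := by norm_num
        omega
    | succ k hk ih =>
        have hcv := hconv (k + 1) (by omega)
        rw [show k + 1 - 1 = k by omega] at hcv
        omega
  have hlow : ∀ n, 2 ≤ n → M * (n - 2) ≤ a n := by
    intro n hn
    induction n, hn using Nat.le_induction with
    | base => simp
    | succ k hk ih =>
        have hs := hstep k hk
        have he : M * (k - 2) + M = M * (k + 1 - 2) := by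
          rw [show k + 1 - 2 = (k - 2) + 1 by omega, Nat.mul_succ]
        omega
  -- conclusion
  intro n hn
  obtain ⟨V, hV⟩ := dvd_trans (pow_dvd_pow (X - 1 : Polynomial ℚ) (hlow n hn)) (hpowdvd n)
  refine ⟨V, hV, ?_⟩
  have hVne : V ≠ 0 := by
    intro h
    exact h0 n (by omega) (by rw [hV, h, mul_zero])
  have hdeg := hD n (by omega)
  rw [hV, natDegree_mul (pow_ne_zero _ X_sub_one_ne) hVne, natDegree_pow,
    X_sub_one_natDegree, mul_one] at hdeg
  have he : M * (n - 2) + M = M * (n - 1) := by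
    rw [show n - 1 = (n - 2) + 1 by omega, Nat.mul_succ]
  omega

/-- For `s = r + 2`, the polynomials `Tₙ` and `Sₙ` factor as
`Tₙ = (t−1)^{m(n−2)}·Ťₙ` with `deg Ťₙ = m` and `Sₙ = (t−1)^{(m+1)(n−2)}·Šₙ`
with `deg Šₙ = m + 1`. -/
theorem statement13 (m r : ℕ) (hm : 0 < m) (hr : 0 < r)
    (T S : ℕ → Polynomial ℚ)
    (hT0 : ∀ n, 1 ≤ n → T n ≠ 0) (hT1 : T 1 = 1) (hT2 : T 2 = W r m (r + 2))
    (hTrec : ∀ n, 2 ≤ n →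
      T (n + 1) * T (n - 1)
        = (X ^ 2 - X) * (T n * derivative (derivative (T n)) - (derivative (T n)) ^ 2)
          + (2 * X - 1) * (T n * derivative (T n))
          + C (((n : ℚ) - 1) * ((n : ℚ) + (r : ℚ))) * (T n) ^ 2)
    (hS0 : ∀ n, 1 ≤ n → S n ≠ 0) (hS1 : S 1 = 1) (hS2 : S 2 = W (r - 1) (m + 1) (r + 1))
    (hSrec : ∀ n, 2 ≤ n →
      S (n + 1) * S (n - 1)
        = (X ^ 2 - X) * (S n * derivative (derivative (S n)) - (derivative (S n)) ^ 2)
          + (2 * X - 1) * (S n * derivative (S n))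
          + C (((n : ℚ) - 1) * ((n : ℚ) + (r : ℚ) - 1)) * (S n) ^ 2) :
    ∀ n, 2 ≤ n →
      (∃ U : Polynomial ℚ, T n = (X - 1) ^ (m * (n - 2)) * U ∧ U.natDegree = m) ∧
      (∃ V : Polynomial ℚ, S n = (X - 1) ^ ((m + 1) * (n - 2)) * V ∧ V.natDegree = m + 1) := by

  have hWS : W (r - 1) (m + 1) (r + 1) = W (r - 1) (m + 1) ((r - 1) + 2) := by
    rw [show r - 1 + 2 = r + 1 by omega]
  have hcastr : (((r - 1 : ℕ)) : ℚ) + 2 = (r : ℚ) + 1 := by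
    have : (((r - 1 : ℕ)) : ℚ) = (r : ℚ) - 1 := by
      push_cast [hr]; ring
    rw [this]; ring
  have mainT := main_machine m hm (fun n => ((n : ℚ) - 1) * ((n : ℚ) + (r : ℚ)))
    (by
      intro n hn
      show 0 < ((n : ℚ) - 1) * ((n : ℚ) + (r : ℚ))
      have h2 : (2 : ℚ) ≤ (n : ℚ) := by exact_mod_cast hn
      have hr0 : (0 : ℚ) ≤ (r : ℚ) := by positivity
      nlinarith)
    T hT0 hT1
    (by rw [hT2]; exact W_natDegree r m)
    (by rw [hT2]; exact W_eval_one r m)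
    (by
      show (X - 1 : Polynomial ℚ) ^ m ∣ Rhs (((((2 : ℕ)) : ℚ) - 1) * ((((2 : ℕ)) : ℚ) + (r : ℚ))) (T 2)
      rw [hT2, show ((((2 : ℕ)) : ℚ) - 1) * ((((2 : ℕ)) : ℚ) + (r : ℚ)) = (r : ℚ) + 2 by
        push_cast; ring]
      exact W_dvd r m hm)
    (by
      intro n hn
      show T (n + 1) * T (n - 1) = Rhs (((n : ℚ) - 1) * ((n : ℚ) + (r : ℚ))) (T n)
      rw [Rhs]; exact hTrec n hn)
  have mainS := main_machine (m + 1) (by omega) (fun n => ((n : ℚ) - 1) * ((n : ℚ) + (r : ℚ) - 1))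
    (by
      intro n hn
      show 0 < ((n : ℚ) - 1) * ((n : ℚ) + (r : ℚ) - 1)
      have h2 : (2 : ℚ) ≤ (n : ℚ) := by exact_mod_cast hn
      have hr1 : (1 : ℚ) ≤ (r : ℚ) := by exact_mod_cast hr
      nlinarith)
    S hS0 hS1
    (by rw [hS2, hWS]; exact W_natDegree (r - 1) (m + 1))
    (by rw [hS2, hWS]; exact W_eval_one (r - 1) (m + 1))
    (by
      show (X - 1 : Polynomial ℚ) ^ (m + 1)
        ∣ Rhs (((((2 : ℕ)) : ℚ) - 1) * ((((2 : ℕ)) : ℚ) + (r : ℚ) - 1)) (S 2)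
      rw [hS2, hWS, show ((((2 : ℕ)) : ℚ) - 1) * ((((2 : ℕ)) : ℚ) + (r : ℚ) - 1) = (r : ℚ) + 1 by
        push_cast; ring, ← hcastr]
      exact W_dvd (r - 1) (m + 1) (by omega))
    (by
      intro n hn
      show S (n + 1) * S (n - 1) = Rhs (((n : ℚ) - 1) * ((n : ℚ) + (r : ℚ) - 1)) (S n)
      rw [Rhs]
      have h := hSrec n hn
      rw [show ((n : ℚ) - 1) * ((n : ℚ) + (r : ℚ) - 1)
          = ((n : ℚ) - 1) * ((n : ℚ) + (r : ℚ)) - ((n : ℚ) - 1) by ring] at h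
      rw [show ((n : ℚ) - 1) * ((n : ℚ) + (r : ℚ) - 1)
          = ((n : ℚ) - 1) * ((n : ℚ) + (r : ℚ)) - ((n : ℚ) - 1) by ring]
      exact h)
  intro n hn
  exact ⟨mainT n hn, mainS n hn⟩
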